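/- (The potential and the mean curvature vector.) Let U : Ω → ℂ, let ψ = (ψ₁,ψ₂) solve Dψ = 0 and φ = (φ₁,φ₂) solve D^∨φ = 0, and let x : Ω → ℝ⁴ be the corresponding Weierstrass surface, i.e. ∂x = (x¹_z, x²_z, x³_z, x⁴_z) with x¹_z = (i/2)(conj φ₂ conj ψ₂ + φ₁ψ₁), x²_z = (1/2)(conj φ₂ conj ψ₂ − φ₁ψ₁), x³_z = (1/2)(conj φ₂ ψ₁ + φ₁ conj ψ₂), x⁴_z = (i/2)(conj φ₂ ψ₁ − φ₁ conj ψ₂). Assume e^{2α} = (|ψ₁|² + |ψ₂|²)(|φ₁|² + |φ₂|²) > 0 and set H = 2 e^{−2α} ∂̄∂x (the mean curvature vector), n₁ = e^{−α}(−Im(ψ₂φ₁ − conj ψ₁ conj φ₂), −Re(conj ψ₁ conj φ₂ + ψ₂φ₁), Re(ψ₂ conj φ₂ − conj ψ₁ φ₁), −Im(conj ψ₁ φ₁ + ψ₂ conj φ₂)), n₂ = e^{−α}(Re(ψ₂φ₁ − conj ψ₁ conj φ₂), −Im(conj ψ₁ conj φ₂ + ψ₂φ₁), Im(ψ₂ conj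 φ₂ − conj ψ₁ φ₁), Re(conj ψ₁ φ₁ + ψ₂ conj φ₂)), and p = e^α (n₁ + i n₂). Then U = (1/2)⟨H, p⟩, where ⟨·,·⟩ is the complex-bilinear (Euclidean, not Hermitian) extension of the scalar product of ℝ⁴. -/

import Mathlib

open Complex Matrix Finset

noncomputable section

/-- Wirtinger derivative `∂f = ½(f_x − i f_y)`. -/
def wdz (f : ℂ → ℂ) (z : ℂ) : ℂ :=
  (1 / 2) * (fderiv ℝ f z 1 - Complex.I * fderiv ℝ f z Complex.I)

/-- Conjugate Wirtinger derivative `∂̄f = ½(f_x + i f_y)`. -/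
def wdzb (f : ℂ → ℂ) (z : ℂ) : ℂ :=
  (1 / 2) * (fderiv ℝ f z 1 + Complex.I * fderiv ℝ f z Complex.I)

/-- The Dirac equation `Dψ = 0` with potential `U` on `Ω`:
`∂ψ₂ + Uψ₁ = 0` and `−∂̄ψ₁ + Ūψ₂ = 0`. -/
def DiracEq (U ψ₁ ψ₂ : ℂ → ℂ) (Ω : Set ℂ) : Prop :=
  ∀ z ∈ Ω, wdz ψ₂ z + U z * ψ₁ z = 0 ∧
    -wdzb ψ₁ z + (starRingEnd ℂ) (U z) * ψ₂ z = 0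

def Gam : Matrix (Fin 2) (Fin 2) ℂ := !![0, 1; -1, 0]

def sig3 : Matrix (Fin 2) (Fin 2) ℂ := !![1, 0; 0, -1]

/-- The quaternionic matrix associated to a spinor. -/
def spinMat (ψ₁ ψ₂ : ℂ → ℂ) (z : ℂ) : Matrix (Fin 2) (Fin 2) ℂ :=
  !![ψ₁ z, -(starRingEnd ℂ) (ψ₂ z); ψ₂ z, (starRingEnd ℂ) (ψ₁ z)]

def wdzM (F : ℂ → Matrix (Fin 2) (Fin 2) ℂ) (z : ℂ) : Matrix (Fin 2) (Fin 2) ℂ :=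
  Matrix.of fun i j => wdz (fun w => F w i j) z

def wdzbM (F : ℂ → Matrix (Fin 2) (Fin 2) ℂ) (z : ℂ) : Matrix (Fin 2) (Fin 2) ℂ :=
  Matrix.of fun i j => wdzb (fun w => F w i j) z

/-- `S` is a primitive of `Γω(Φ,Ψ)` on `Ω`. -/
def IsPrimitive (Φ Ψ S : ℂ → Matrix (Fin 2) (Fin 2) ℂ) (Ω : Set ℂ) : Prop :=
  ∀ z ∈ Ω,
    wdzM S z = (-(Complex.I / 2)) • (Gam * (Φ z)ᵀ * (sig3 + 1) * Ψ z) ∧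
    wdzbM S z = (-(Complex.I / 2)) • (Gam * (Φ z)ᵀ * (sig3 - 1) * Ψ z)

def MatDiffOn (F : ℂ → Matrix (Fin 2) (Fin 2) ℂ) (Ω : Set ℂ) : Prop :=
  ∀ z ∈ Ω, ∀ i j, DifferentiableAt ℝ (fun w => F w i j) z

/-- A matrix solution of the Dirac equation: both columns solve `Dψ = 0`. -/
def MatDiracEq (U : ℂ → ℂ) (Ψ : ℂ → Matrix (Fin 2) (Fin 2) ℂ) (Ω : Set ℂ) : Prop :=
  ∀ j : Fin 2, DiracEq U (fun z => Ψ z 0 j) (fun z => Ψ z 1 j) Ω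

/-- The Weierstrass derivatives `x^k_z` of the Weierstrass representation. -/
def weierXz (ψ₁ ψ₂ φ₁ φ₂ : ℂ) : Fin 4 → ℂ :=
  ![(Complex.I / 2) * ((starRingEnd ℂ) φ₂ * (starRingEnd ℂ) ψ₂ + φ₁ * ψ₁),
    (1 / 2) * ((starRingEnd ℂ) φ₂ * (starRingEnd ℂ) ψ₂ - φ₁ * ψ₁),
    (1 / 2) * ((starRingEnd ℂ) φ₂ * ψ₁ + φ₁ * (starRingEnd ℂ) ψ₂),
    (Complex.I / 2) * ((starRingEnd ℂ) φ₂ * ψ₁ - φ₁ * (starRingEnd ℂ) ψ₂)]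

/-- Identification of `ℝ⁴` with `u(2)`. -/
def toU2 (x : Fin 4 → ℝ) : Matrix (Fin 2) (Fin 2) ℂ :=
  !![Complex.I * (x 2 : ℂ) + (x 3 : ℂ), -(x 0 : ℂ) - Complex.I * (x 1 : ℂ);
     (x 0 : ℂ) - Complex.I * (x 1 : ℂ), -Complex.I * (x 2 : ℂ) + (x 3 : ℂ)]


/-- The conformal factor `e^{2α} = (|ψ₁|² + |ψ₂|²)(|φ₁|² + |φ₂|²)`. -/
def weierE2a (ψ₁ ψ₂ φ₁ φ₂ : ℂ) : ℝ :=
  (Complex.normSq ψ₁ + Complex.normSq ψ₂) * (Complex.normSq φ₁ + Complex.normSq φ₂)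

/-- The normal vector `n₁` of the Weierstrass representation. -/
def weierN1 (ψ₁ ψ₂ φ₁ φ₂ : ℂ) : Fin 4 → ℝ := fun k =>
  (Real.sqrt (weierE2a ψ₁ ψ₂ φ₁ φ₂))⁻¹ *
    ![-(ψ₂ * φ₁ - (starRingEnd ℂ) ψ₁ * (starRingEnd ℂ) φ₂).im,
      -((starRingEnd ℂ) ψ₁ * (starRingEnd ℂ) φ₂ + ψ₂ * φ₁).re,
      (ψ₂ * (starRingEnd ℂ) φ₂ - (starRingEnd ℂ) ψ₁ * φ₁).re,
      -((starRingEnd ℂ) ψ₁ * φ₁ + ψ₂ * (starRingEnd ℂ) φ₂).im] k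

/-- The normal vector `n₂` of the Weierstrass representation. -/
def weierN2 (ψ₁ ψ₂ φ₁ φ₂ : ℂ) : Fin 4 → ℝ := fun k =>
  (Real.sqrt (weierE2a ψ₁ ψ₂ φ₁ φ₂))⁻¹ *
    ![(ψ₂ * φ₁ - (starRingEnd ℂ) ψ₁ * (starRingEnd ℂ) φ₂).re,
      -((starRingEnd ℂ) ψ₁ * (starRingEnd ℂ) φ₂ + ψ₂ * φ₁).im,
      (ψ₂ * (starRingEnd ℂ) φ₂ - (starRingEnd ℂ) ψ₁ * φ₁).im,
      ((starRingEnd ℂ) ψ₁ * φ₁ + ψ₂ * (starRingEnd ℂ) φ₂).re] k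

/-- The complex normal vector `p = e^α (n₁ + i n₂)`. -/
def weierP (ψ₁ ψ₂ φ₁ φ₂ : ℂ) : Fin 4 → ℂ := fun k =>
  (Real.sqrt (weierE2a ψ₁ ψ₂ φ₁ φ₂) : ℂ) *
    ((weierN1 ψ₁ ψ₂ φ₁ φ₂ k : ℂ) + Complex.I * (weierN2 ψ₁ ψ₂ φ₁ φ₂ k : ℂ))


lemma wdz_congr {f g : ℂ → ℂ} {z : ℂ} (h : f =ᶠ[nhds z] g) : wdz f z = wdz g z := by
  unfold wdz; rw [h.fderiv_eq]

lemma wdzb_congr {f g : ℂ → ℂ} {z : ℂ} (h : f =ᶠ[nhds z] g) : wdzb f z = wdzb g z := by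
  unfold wdzb; rw [h.fderiv_eq]

lemma diff_conj {f : ℂ → ℂ} {z : ℂ} (hf : DifferentiableAt ℝ f z) :
    DifferentiableAt ℝ (fun w => (starRingEnd ℂ) (f w)) z :=
  Complex.conjCLE.differentiable.differentiableAt.comp z hf

lemma fderiv_conj_apply {f : ℂ → ℂ} {z : ℂ} (hf : DifferentiableAt ℝ f z) (v : ℂ) :
    fderiv ℝ (fun w => (starRingEnd ℂ) (f w)) z v = (starRingEnd ℂ) (fderiv ℝ f z v) := by
  have h := (Complex.conjCLE.toContinuousLinearMap.hasFDerivAt.comp z hf.hasFDerivAt).fderiv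
  have h2 : fderiv ℝ (fun w => (starRingEnd ℂ) (f w)) z
      = (Complex.conjCLE.toContinuousLinearMap).comp (fderiv ℝ f z) := h
  rw [h2]; rfl

lemma wdzb_conj {f : ℂ → ℂ} {z : ℂ} (hf : DifferentiableAt ℝ f z) :
    wdzb (fun w => (starRingEnd ℂ) (f w)) z = (starRingEnd ℂ) (wdz f z) := by
  unfold wdz wdzb
  rw [fderiv_conj_apply hf, fderiv_conj_apply hf]
  simp only [_root_.map_mul, _root_.map_sub, map_div₀, _root_.map_one, map_ofNat, Complex.conj_I]
  ring

lemma wdzb_mul {f g : ℂ → ℂ} {z : ℂ} (hf : DifferentiableAt ℝ f z) (hg : DifferentiableAt ℝ g z) :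
    wdzb (fun w => f w * g w) z = wdzb f z * g z + f z * wdzb g z := by
  unfold wdzb
  rw [fderiv_fun_mul hf hg]
  simp [smul_eq_mul]
  ring

lemma wdzb_add {f g : ℂ → ℂ} {z : ℂ} (hf : DifferentiableAt ℝ f z) (hg : DifferentiableAt ℝ g z) :
    wdzb (fun w => f w + g w) z = wdzb f z + wdzb g z := by
  unfold wdzb
  rw [fderiv_fun_add hf hg]
  simp; ring

lemma wdzb_sub {f g : ℂ → ℂ} {z : ℂ} (hf : DifferentiableAt ℝ f z) (hg : DifferentiableAt ℝ g z) :
    wdzb (fun w => f w - g w) z = wdzb f z - wdzb g z := by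
  unfold wdzb
  rw [fderiv_fun_sub hf hg]
  simp; ring

lemma wdzb_const_mul {f : ℂ → ℂ} {z : ℂ} (c : ℂ) (hf : DifferentiableAt ℝ f z) :
    wdzb (fun w => c * f w) z = c * wdzb f z := by
  unfold wdzb
  rw [fderiv_const_mul hf c]
  simp [smul_eq_mul]; ring

lemma weierP_eq (ψ₁ ψ₂ φ₁ φ₂ : ℂ) (h : 0 < weierE2a ψ₁ ψ₂ φ₁ φ₂) (k : Fin 4) :
    weierP ψ₁ ψ₂ φ₁ φ₂ k =
      ![Complex.I * (ψ₂ * φ₁ - (starRingEnd ℂ) ψ₁ * (starRingEnd ℂ) φ₂),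
        -((starRingEnd ℂ) ψ₁ * (starRingEnd ℂ) φ₂ + ψ₂ * φ₁),
        ψ₂ * (starRingEnd ℂ) φ₂ - (starRingEnd ℂ) ψ₁ * φ₁,
        Complex.I * ((starRingEnd ℂ) ψ₁ * φ₁ + ψ₂ * (starRingEnd ℂ) φ₂)] k := by
  have hs : Real.sqrt (weierE2a ψ₁ ψ₂ φ₁ φ₂) ≠ 0 := ne_of_gt (Real.sqrt_pos.mpr h)
  have hs' : (Real.sqrt (weierE2a ψ₁ ψ₂ φ₁ φ₂) : ℂ) ≠ 0 := by exact_mod_cast hs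
  fin_cases k <;>
  · simp only [weierP, weierN1, weierN2, Matrix.cons_val_zero, Matrix.cons_val_one,
      Matrix.head_cons, Matrix.cons_val_two, Matrix.tail_cons, Matrix.cons_val_three,
      Fin.isValue]
    push_cast
    rw [mul_add, ← mul_assoc, ← mul_assoc]
    rw [mul_inv_cancel₀ hs']
    apply Complex.ext <;> simp [← mul_assoc, mul_inv_cancel₀ hs]

/-- the potential and the mean curvature vector: `U = ½⟨H, p⟩`, where
`H = 2 e^{−2α} ∂̄∂x` is the mean curvature vector of the Weierstrass surface `x` and
`p = e^α(n₁ + i n₂)` is the complex normal vector. -/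
theorem potential_is_half_H_dot_p
    (Ω : Set ℂ) (hΩ : IsOpen Ω) (U ψ₁ ψ₂ φ₁ φ₂ : ℂ → ℂ)
    (hψ₁ : ∀ z ∈ Ω, DifferentiableAt ℝ ψ₁ z)
    (hψ₂ : ∀ z ∈ Ω, DifferentiableAt ℝ ψ₂ z)
    (hφ₁ : ∀ z ∈ Ω, DifferentiableAt ℝ φ₁ z)
    (hφ₂ : ∀ z ∈ Ω, DifferentiableAt ℝ φ₂ z)
    (hψ : DiracEq U ψ₁ ψ₂ Ω)
    (hφ : DiracEq (fun z => (starRingEnd ℂ) (U z)) φ₁ φ₂ Ω)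
    (x : ℂ → Fin 4 → ℝ)
    (hx : ∀ z ∈ Ω, ∀ k : Fin 4,
      wdz (fun w => ((x w k : ℝ) : ℂ)) z = weierXz (ψ₁ z) (ψ₂ z) (φ₁ z) (φ₂ z) k)
    (hxdiff : ∀ z ∈ Ω, ∀ k : Fin 4, DifferentiableAt ℝ (fun w => ((x w k : ℝ) : ℂ)) z)
    (hxdiff2 : ∀ z ∈ Ω, ∀ k : Fin 4,
      DifferentiableAt ℝ (fun w => wdz (fun v => ((x v k : ℝ) : ℂ)) w) z)
    (hpos : ∀ z ∈ Ω, 0 < weierE2a (ψ₁ z) (ψ₂ z) (φ₁ z) (φ₂ z)) :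
    ∀ z ∈ Ω,
      U z = (1 / 2) * ∑ k : Fin 4,
        ((2 / (weierE2a (ψ₁ z) (ψ₂ z) (φ₁ z) (φ₂ z) : ℝ) : ℂ) *
            wdzb (fun w => wdz (fun v => ((x v k : ℝ) : ℂ)) w) z) *
          weierP (ψ₁ z) (ψ₂ z) (φ₁ z) (φ₂ z) k := by
  intro z hz
  have d1 : DifferentiableAt ℝ ψ₁ z := hψ₁ z hz
  have d2 : DifferentiableAt ℝ ψ₂ z := hψ₂ z hz
  have d3 : DifferentiableAt ℝ φ₁ z := hφ₁ z hz
  have d4 : DifferentiableAt ℝ φ₂ z := hφ₂ z hz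
  have hdψ₂ : wdz ψ₂ z = -(U z * ψ₁ z) := by linear_combination (hψ z hz).1
  have hbψ₁ : wdzb ψ₁ z = (starRingEnd ℂ) (U z) * ψ₂ z := by linear_combination -(hψ z hz).2
  have hdφ₂ : wdz φ₂ z = -((starRingEnd ℂ) (U z) * φ₁ z) := by linear_combination (hφ z hz).1
  have hbφ₁ : wdzb φ₁ z = U z * φ₂ z := by
    have h2 := (hφ z hz).2
    rw [Complex.conj_conj] at h2
    linear_combination -h2
  have hev : ∀ k : Fin 4, (fun w => wdz (fun v => ((x v k : ℝ) : ℂ)) w)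
      =ᶠ[nhds z] (fun w => weierXz (ψ₁ w) (ψ₂ w) (φ₁ w) (φ₂ w) k) :=
    fun k => Filter.eventuallyEq_of_mem (hΩ.mem_nhds hz) (fun w hw => hx w hw k)
  -- the four second derivatives
  have H0 : wdzb (fun w => wdz (fun v => ((x v 0 : ℝ) : ℂ)) w) z
      = (Complex.I / 2) *
        ((-(U z * (starRingEnd ℂ) (φ₁ z)) * (starRingEnd ℂ) (ψ₂ z)
            + (starRingEnd ℂ) (φ₂ z) * (-((starRingEnd ℂ) (U z) * (starRingEnd ℂ) (ψ₁ z))))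
          + ((U z * φ₂ z) * ψ₁ z + φ₁ z * ((starRingEnd ℂ) (U z) * ψ₂ z))) := by
    rw [wdzb_congr (hev 0)]
    have e0 : (fun w => weierXz (ψ₁ w) (ψ₂ w) (φ₁ w) (φ₂ w) 0)
        = fun w => (Complex.I / 2) *
          ((starRingEnd ℂ) (φ₂ w) * (starRingEnd ℂ) (ψ₂ w) + φ₁ w * ψ₁ w) := by
      funext w; simp [weierXz]
    rw [e0, wdzb_const_mul _ (((diff_conj d4).fun_mul (diff_conj d2)).fun_add (d3.fun_mul d1)),
      wdzb_add ((diff_conj d4).fun_mul (diff_conj d2)) (d3.fun_mul d1),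
      wdzb_mul (diff_conj d4) (diff_conj d2), wdzb_mul d3 d1,
      wdzb_conj d4, wdzb_conj d2, hdφ₂, hdψ₂, hbφ₁, hbψ₁]
    simp only [_root_.map_mul, _root_.map_neg, Complex.conj_conj]
  have H1 : wdzb (fun w => wdz (fun v => ((x v 1 : ℝ) : ℂ)) w) z
      = (1 / 2) *
        ((-(U z * (starRingEnd ℂ) (φ₁ z)) * (starRingEnd ℂ) (ψ₂ z)
            + (starRingEnd ℂ) (φ₂ z) * (-((starRingEnd ℂ) (U z) * (starRingEnd ℂ) (ψ₁ z))))
          - ((U z * φ₂ z) * ψ₁ z + φ₁ z * ((starRingEnd ℂ) (U z) * ψ₂ z))) := by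
    rw [wdzb_congr (hev 1)]
    have e1 : (fun w => weierXz (ψ₁ w) (ψ₂ w) (φ₁ w) (φ₂ w) 1)
        = fun w => (1 / 2 : ℂ) *
          ((starRingEnd ℂ) (φ₂ w) * (starRingEnd ℂ) (ψ₂ w) - φ₁ w * ψ₁ w) := by
      funext w; simp [weierXz]
    rw [e1, wdzb_const_mul _ (((diff_conj d4).fun_mul (diff_conj d2)).fun_sub (d3.fun_mul d1)),
      wdzb_sub ((diff_conj d4).fun_mul (diff_conj d2)) (d3.fun_mul d1),
      wdzb_mul (diff_conj d4) (diff_conj d2), wdzb_mul d3 d1,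
      wdzb_conj d4, wdzb_conj d2, hdφ₂, hdψ₂, hbφ₁, hbψ₁]
    simp only [_root_.map_mul, _root_.map_neg, Complex.conj_conj]
  have H2 : wdzb (fun w => wdz (fun v => ((x v 2 : ℝ) : ℂ)) w) z
      = (1 / 2) *
        ((-(U z * (starRingEnd ℂ) (φ₁ z)) * ψ₁ z
            + (starRingEnd ℂ) (φ₂ z) * ((starRingEnd ℂ) (U z) * ψ₂ z))
          + ((U z * φ₂ z) * (starRingEnd ℂ) (ψ₂ z)
            + φ₁ z * (-((starRingEnd ℂ) (U z) * (starRingEnd ℂ) (ψ₁ z))))) := by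
    rw [wdzb_congr (hev 2)]
    have e2 : (fun w => weierXz (ψ₁ w) (ψ₂ w) (φ₁ w) (φ₂ w) 2)
        = fun w => (1 / 2 : ℂ) *
          ((starRingEnd ℂ) (φ₂ w) * ψ₁ w + φ₁ w * (starRingEnd ℂ) (ψ₂ w)) := by
      funext w; simp [weierXz]
    rw [e2, wdzb_const_mul _ (((diff_conj d4).fun_mul d1).fun_add (d3.fun_mul (diff_conj d2))),
      wdzb_add ((diff_conj d4).fun_mul d1) (d3.fun_mul (diff_conj d2)),
      wdzb_mul (diff_conj d4) d1, wdzb_mul d3 (diff_conj d2),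
      wdzb_conj d4, wdzb_conj d2, hdφ₂, hdψ₂, hbφ₁, hbψ₁]
    simp only [_root_.map_mul, _root_.map_neg, Complex.conj_conj]
  have H3 : wdzb (fun w => wdz (fun v => ((x v 3 : ℝ) : ℂ)) w) z
      = (Complex.I / 2) *
        ((-(U z * (starRingEnd ℂ) (φ₁ z)) * ψ₁ z
            + (starRingEnd ℂ) (φ₂ z) * ((starRingEnd ℂ) (U z) * ψ₂ z))
          - ((U z * φ₂ z) * (starRingEnd ℂ) (ψ₂ z)
            + φ₁ z * (-((starRingEnd ℂ) (U z) * (starRingEnd ℂ) (ψ₁ z))))) := by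
    rw [wdzb_congr (hev 3)]
    have e3 : (fun w => weierXz (ψ₁ w) (ψ₂ w) (φ₁ w) (φ₂ w) 3)
        = fun w => (Complex.I / 2) *
          ((starRingEnd ℂ) (φ₂ w) * ψ₁ w - φ₁ w * (starRingEnd ℂ) (ψ₂ w)) := by
      funext w; simp [weierXz]
    rw [e3, wdzb_const_mul _ (((diff_conj d4).fun_mul d1).fun_sub (d3.fun_mul (diff_conj d2))),
      wdzb_sub ((diff_conj d4).fun_mul d1) (d3.fun_mul (diff_conj d2)),
      wdzb_mul (diff_conj d4) d1, wdzb_mul d3 (diff_conj d2),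
      wdzb_conj d4, wdzb_conj d2, hdφ₂, hdψ₂, hbφ₁, hbψ₁]
    simp only [_root_.map_mul, _root_.map_neg, Complex.conj_conj]
  have hpz := hpos z hz
  have he : ((weierE2a (ψ₁ z) (ψ₂ z) (φ₁ z) (φ₂ z) : ℝ) : ℂ)
      = (ψ₁ z * (starRingEnd ℂ) (ψ₁ z) + ψ₂ z * (starRingEnd ℂ) (ψ₂ z)) *
        (φ₁ z * (starRingEnd ℂ) (φ₁ z) + φ₂ z * (starRingEnd ℂ) (φ₂ z)) := by
    simp only [weierE2a, Complex.mul_conj]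
    push_cast
    ring
  have hne : ((weierE2a (ψ₁ z) (ψ₂ z) (φ₁ z) (φ₂ z) : ℝ) : ℂ) ≠ 0 :=
    Complex.ofReal_ne_zero.mpr (ne_of_gt hpz)
  have hne2 : (ψ₁ z * (starRingEnd ℂ) (ψ₁ z) + ψ₂ z * (starRingEnd ℂ) (ψ₂ z)) *
      (φ₁ z * (starRingEnd ℂ) (φ₁ z) + φ₂ z * (starRingEnd ℂ) (φ₂ z)) ≠ 0 := he ▸ hne
  rw [Fin.sum_univ_four, H0, H1, H2, H3,
    weierP_eq _ _ _ _ hpz 0, weierP_eq _ _ _ _ hpz 1,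
    weierP_eq _ _ _ _ hpz 2, weierP_eq _ _ _ _ hpz 3, he]
  simp only [Matrix.cons_val_zero, Matrix.cons_val_one, Matrix.head_cons,
    Matrix.cons_val_two, Matrix.tail_cons, Matrix.cons_val_three]
  field_simp
  rw [eq_div_iff hne2]
  ring_nf
  simp only [Complex.I_sq]
  ring
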